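/- The number of isomorphism classes of semigroups of the form (T_n, *_a), a ∈ T_n, equals p(n), the number of partitions of the integer n. -/

import Mathlib

/-- Left-to-right composition in the full transformation monoid `T_n`:
`(x · a)(i) = a (x i)` (apply `x` first, then `a`). -/
def Tcomp {n : ℕ} (x a : Fin n → Fin n) : Fin n → Fin n := fun i => a (x i)

/-- The deformed multiplication `x *_a y = x · a · y` on `T_n`. -/
def Tdmul {n : ℕ} (a x y : Fin n → Fin n) : Fin n → Fin n := Tcomp (Tcomp x a) y

namespace CIT

set_option linter.unusedSectionVars false

open Finset

variable {α β : Type*} [Fintype α] [DecidableEq α] [Fintype β] [DecidableEq β]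

/-- cardinality of the fiber of `a` over `y` -/
def fibc (a : α → α) (y : α) : ℕ := (univ.filter (fun x => a x = y)).card

lemma fibc_eq_card (a : α → α) (y : α) : fibc a y = Fintype.card {x // a x = y} :=
  (Fintype.card_subtype _).symm

/-- multiset of all fiber sizes -/
def ftype (a : α → α) : Multiset ℕ := Finset.univ.val.map (fibc a)

/-- multiset of elementwise fiber sizes -/
def Etype (a : α → α) : Multiset ℕ := Finset.univ.val.map (fun x => fibc a (a x))

lemma map_univ_val_equiv (e : α ≃ β) :
    (univ : Finset α).val.map e = (univ : Finset β).val := by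
  have h : Multiset.map (⇑e.toEmbedding) (univ : Finset α).val = (univ : Finset β).val := by
    rw [← Finset.map_val, Finset.map_univ_equiv]
  exact h

lemma card_ftype (a : α → α) : Multiset.card (ftype a) = Fintype.card α := by
  simp [ftype]

lemma count_ftype (a : α → α) (k : ℕ) :
    (ftype a).count k = (univ.filter (fun y => fibc a y = k)).card := by
  rw [ftype, Multiset.count_map]
  congr 1
  exact Multiset.filter_congr (fun x _ => by constructor <;> exact Eq.symm)

lemma count_Etype (a : α → α) (k : ℕ) :
    (Etype a).count k = (univ.filter (fun x => fibc a (a x) = k)).card := by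
  rw [Etype, Multiset.count_map]
  congr 1
  exact Multiset.filter_congr (fun x _ => by constructor <;> exact Eq.symm)

lemma card_Etype (a : α → α) : Multiset.card (Etype a) = Fintype.card α := by
  simp [Etype]

/-- key counting identity -/
lemma count_Etype_eq (a : α → α) (k : ℕ) (hk : k ≠ 0) :
    (Etype a).count k = k * (ftype a).count k := by
  rw [count_Etype, count_ftype]
  rw [Finset.card_eq_sum_card_fiberwise
    (f := a) (t := univ.filter (fun y => fibc a y = k))
    (fun x hx => by simp at hx ⊢; exact hx)]
  have hterm : ∀ y ∈ univ.filter (fun y => fibc a y = k),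
      (Finset.filter (fun x => a x = y) (Finset.filter (fun x => fibc a (a x) = k) univ)).card = k := by
    intro y hy
    simp only [mem_filter, mem_univ, true_and] at hy
    have h1 : (filter (fun x => a x = y) (filter (fun x => fibc a (a x) = k) univ))
        = filter (fun x => a x = y) univ := by
      ext x
      simp only [mem_filter, mem_univ, true_and]
      constructor
      · rintro ⟨_, h2⟩; exact h2
      · rintro h2; exact ⟨by rw [h2]; exact hy, h2⟩
    rw [h1]
    exact hy
  rw [Finset.sum_congr rfl hterm, Finset.sum_const, smul_eq_mul, mul_comm]

lemma multiset_eq_of_counts {s t : Multiset ℕ} (hcard : Multiset.card s = Multiset.card t)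
    (h : ∀ k, k ≠ 0 → s.count k = t.count k) : s = t := by
  have hf : s.filter (· ≠ 0) = t.filter (· ≠ 0) := by
    ext k
    rw [Multiset.count_filter, Multiset.count_filter]
    split
    · exact h k (by assumption)
    · rfl
  have hcount0 : ∀ u : Multiset ℕ, u.count 0 + Multiset.card (u.filter (· ≠ 0)) = Multiset.card u := by
    intro u
    have h2 : u.filter (fun x => ¬ x ≠ 0) = u.filter (fun x => x = 0) := by
      apply Multiset.filter_congr; intro x _; simp
    have h3 : u.filter (fun x => x = 0) = Multiset.replicate (u.count 0) 0 :=
      Multiset.filter_eq' u 0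
    calc u.count 0 + Multiset.card (u.filter (· ≠ 0))
        = Multiset.card (u.filter (fun x => ¬ x ≠ 0)) + Multiset.card (u.filter (· ≠ 0)) := by
          rw [h2, h3, Multiset.card_replicate]
      _ = Multiset.card u := by
          rw [add_comm, ← Multiset.card_add, Multiset.filter_add_not]
  have h0 : s.count 0 = t.count 0 := by
    have hs := hcount0 s
    have ht := hcount0 t
    rw [hf] at hs
    omega
  ext k
  rcases eq_or_ne k 0 with rfl | hk
  · exact h0
  · exact h k hk

lemma ftype_eq_of_Etype_eq {a b : α → α} (h : Etype a = Etype b) : ftype a = ftype b := by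
  apply multiset_eq_of_counts
  · rw [card_ftype, card_ftype]
  · intro k hk
    have := congrArg (Multiset.count k) h
    rw [count_Etype_eq a k hk, count_Etype_eq b k hk] at this
    exact Nat.eq_of_mul_eq_mul_left (Nat.pos_of_ne_zero hk) this

/-! ### gluing equivalences -/

lemma exists_equiv_comp {f g : α → ℕ}
    (h : (univ : Finset α).val.map f = (univ : Finset α).val.map g) :
    ∃ σ : α ≃ α, ∀ x, g (σ x) = f x := by
  have hc : ∀ k, Fintype.card {x // f x = k} = Fintype.card {x // g x = k} := by
    intro k
    have hck := congrArg (Multiset.count k) h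
    rw [Multiset.count_map, Multiset.count_map] at hck
    rw [Fintype.card_subtype, Fintype.card_subtype]
    have e1 : Multiset.filter (fun a => k = f a) univ.val
        = Multiset.filter (fun a => f a = k) univ.val :=
      Multiset.filter_congr (fun x _ => by constructor <;> exact Eq.symm)
    have e2 : Multiset.filter (fun a => k = g a) univ.val
        = Multiset.filter (fun a => g a = k) univ.val :=
      Multiset.filter_congr (fun x _ => by constructor <;> exact Eq.symm)
    rw [e1, e2] at hck
    exact hck
  classical
  let F : ∀ k : ℕ, {x // f x = k} ≃ {x // g x = k} := fun k => Fintype.equivOfCardEq (hc k)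
  refine ⟨(Equiv.sigmaFiberEquiv f).symm.trans
    ((Equiv.sigmaCongrRight F).trans (Equiv.sigmaFiberEquiv g)), fun x => ?_⟩
  exact ((F (f x)) ⟨x, rfl⟩).2

def sigmaShift (b : α → α) (σ : α ≃ α) : (Σ y : α, {x // b x = σ y}) ≃ α where
  toFun z := z.2.1
  invFun x := ⟨σ.symm (b x), ⟨x, by simp⟩⟩
  left_inv z := by
    rcases z with ⟨y, x, hx⟩
    exact Sigma.subtype_ext (by simp [hx]) rfl
  right_inv x := rfl

lemma exists_reindex {a b : α → α} (σ : α ≃ α) (hσ : ∀ y, fibc b (σ y) = fibc a y) :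
    ∃ φ : α ≃ α, ∀ x, b (φ x) = σ (a x) := by
  classical
  have hc : ∀ y, Fintype.card {x // a x = y} = Fintype.card {x // b x = σ y} := by
    intro y; rw [← fibc_eq_card, ← fibc_eq_card, hσ]
  let F : ∀ y : α, {x // a x = y} ≃ {x // b x = σ y} := fun y => Fintype.equivOfCardEq (hc y)
  refine ⟨(Equiv.sigmaFiberEquiv a).symm.trans
    ((Equiv.sigmaCongrRight F).trans (sigmaShift b σ)), fun x => ?_⟩
  exact ((F (a x)) ⟨x, rfl⟩).2

/-! ### same fiber type implies isomorphic variants -/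

lemma iso_of_ftype_eq {n : ℕ} {a b : Fin n → Fin n} (h : ftype a = ftype b) :
    ∃ e : (Fin n → Fin n) ≃ (Fin n → Fin n),
      ∀ x y : Fin n → Fin n, e (Tdmul a x y) = Tdmul b (e x) (e y) := by
  obtain ⟨σ, hσ⟩ := exists_equiv_comp (f := fibc a) (g := fibc b) h
  obtain ⟨φ, hφ⟩ := exists_reindex σ hσ
  refine ⟨Equiv.arrowCongr σ φ, fun x y => ?_⟩
  funext i
  simp only [Tdmul, Tcomp, Equiv.arrowCongr_apply, Function.comp_apply, hφ,
    Equiv.symm_apply_apply]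

/-! ### isomorphic variants have the same elementwise fiber type -/

lemma Etype_eq_of_iso {n : ℕ} {a b : Fin n → Fin n}
    (e : (Fin n → Fin n) ≃ (Fin n → Fin n))
    (he : ∀ x y : Fin n → Fin n, e (Tdmul a x y) = Tdmul b (e x) (e y)) :
    Etype a = Etype b := by
  rcases Nat.eq_zero_or_pos n with rfl | hn
  · simp [Etype]
  set i0 : Fin n := ⟨0, hn⟩
  set K : Fin n → (Fin n → Fin n) := fun v _ => v with hKdef
  have hKa : ∀ (x : Fin n → Fin n) (v : Fin n), Tdmul a x (K v) = K v := fun _ _ => rfl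
  have hKb : ∀ (x : Fin n → Fin n) (v : Fin n), Tdmul b x (K v) = K v := fun _ _ => rfl
  have hconst : ∀ (m : Fin n → Fin n) (c : Fin n → Fin n),
      (∀ u, Tdmul m u c = c) → ∀ i j, c i = c j := by
    intro m c hc i j
    have hi := congrFun (hc (fun _ => j)) i
    have hj := congrFun (hc (fun _ => j)) j
    exact (hi.symm.trans hj : c i = c j)
  have hEc : ∀ v u, Tdmul b u (e (K v)) = e (K v) := by
    intro v u
    calc Tdmul b u (e (K v)) = Tdmul b (e (e.symm u)) (e (K v)) := by rw [e.apply_symm_apply]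
      _ = e (Tdmul a (e.symm u) (K v)) := (he _ _).symm
      _ = e (K v) := by rw [hKa]
  set f : Fin n → Fin n := fun v => e (K v) i0 with hfdef
  have hf : ∀ v, e (K v) = K (f v) := by
    intro v
    funext i
    exact hconst b (e (K v)) (hEc v) i i0
  have he' : ∀ x y : Fin n → Fin n, e.symm (Tdmul b x y) = Tdmul a (e.symm x) (e.symm y) := by
    intro x y
    apply e.injective
    rw [e.apply_symm_apply, he, e.apply_symm_apply, e.apply_symm_apply]
  have hEc' : ∀ w u, Tdmul a u (e.symm (K w)) = e.symm (K w) := by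
    intro w u
    calc Tdmul a u (e.symm (K w)) = Tdmul a (e.symm (e u)) (e.symm (K w)) := by
          rw [e.symm_apply_apply]
      _ = e.symm (Tdmul b (e u) (K w)) := (he' _ _).symm
      _ = e.symm (K w) := by rw [hKb]
  set f' : Fin n → Fin n := fun w => e.symm (K w) i0 with hf'def
  have hf' : ∀ w, e.symm (K w) = K (f' w) := by
    intro w
    funext i
    exact hconst a (e.symm (K w)) (hEc' w) i i0
  have hf'f : ∀ v, f' (f v) = v := by
    intro v
    have h1 : e.symm (K (f v)) = K v := by rw [← hf, e.symm_apply_apply]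
    have := congrFun ((hf' (f v)).symm.trans h1) i0
    exact this
  have hff' : ∀ w, f (f' w) = w := by
    intro w
    have h1 : e (K (f' w)) = K w := by rw [← hf', e.apply_symm_apply]
    have := congrFun ((hf (f' w)).symm.trans h1) i0
    exact this
  have hKmul : ∀ (v : Fin n) (z : Fin n → Fin n), Tdmul a (K v) z = K (z (a v)) := fun _ _ => rfl
  have hKmulb : ∀ (w : Fin n) (z : Fin n → Fin n), Tdmul b (K w) z = K (z (b w)) := fun _ _ => rfl
  have star : ∀ v, b (f v) = f (e.symm id (a v)) := by
    intro v
    have h1 := he (K v) (e.symm id)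
    rw [hKmul, hf, hf, e.apply_symm_apply, hKmulb] at h1
    exact (congrFun h1 i0).symm
  have star' : ∀ w, a (f' w) = f' (e id (b w)) := by
    intro w
    have h1 := he' (K w) (e id)
    rw [hKmulb, hf', hf', e.symm_apply_apply, hKmul] at h1
    exact (congrFun h1 i0).symm
  have hcomp : ∀ v v', a v = a v' ↔ b (f v) = b (f v') := by
    intro v v'
    constructor
    · intro h; rw [star v, star v', h]
    · intro h
      have h1 := star' (f v)
      rw [hf'f, h] at h1
      rw [h1, ← star' (f v'), hf'f]
  have hW : ∀ v, fibc a (a v) = fibc b (b (f v)) := by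
    intro v
    apply Finset.card_bij' (i := fun x _ => f x) (j := fun x _ => f' x)
    · intro x hx
      simp only [mem_filter, mem_univ, true_and] at hx ⊢
      exact (hcomp x v).1 hx
    · intro x hx
      simp only [mem_filter, mem_univ, true_and] at hx ⊢
      have := (hcomp (f' x) v).2
      rw [hff'] at this
      exact this hx
    · intro x _; exact hf'f x
    · intro x _; exact hff' x
  calc Etype a = Finset.univ.val.map ((fun x => fibc b (b x)) ∘ f) := by
        unfold Etype
        congr 1
        funext v
        exact hW v
    _ = (Finset.univ.val.map f).map (fun x => fibc b (b x)) := by rw [Multiset.map_map]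
    _ = Etype b := by
        unfold Etype
        congr 1
        simpa using map_univ_val_equiv ⟨f, f', hf'f, hff'⟩

/-! ### realization of partitions -/

def subtypeSumEquiv {γ δ : Type*} (p : γ ⊕ δ → Prop) [DecidablePred p] :
    {z : γ ⊕ δ // p z} ≃ {x : γ // p (Sum.inl x)} ⊕ {y : δ // p (Sum.inr y)} where
  toFun z := match z with
    | ⟨Sum.inl x, h⟩ => Sum.inl ⟨x, h⟩
    | ⟨Sum.inr y, h⟩ => Sum.inr ⟨y, h⟩
  invFun w := match w with
    | Sum.inl ⟨x, h⟩ => ⟨Sum.inl x, h⟩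
    | Sum.inr ⟨y, h⟩ => ⟨Sum.inr y, h⟩
  left_inv := by rintro ⟨(x|y), h⟩ <;> rfl
  right_inv := by rintro (⟨x,h⟩|⟨y,h⟩) <;> rfl

lemma fibc_conj (σ : α ≃ β) (u : α → α) (y : α) :
    fibc (⇑σ ∘ u ∘ ⇑σ.symm) (σ y) = fibc u y := by
  rw [fibc_eq_card, fibc_eq_card]
  exact (Fintype.card_congr (Equiv.subtypeEquiv σ (fun x => by simp))).symm

lemma ftype_conj (σ : α ≃ β) (u : α → α) :
    ftype (⇑σ ∘ u ∘ ⇑σ.symm) = ftype u := by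
  unfold ftype
  rw [← map_univ_val_equiv σ, Multiset.map_map]
  congr 1
  funext y
  exact fibc_conj σ u y

lemma ftype_comb {k : ℕ} (hk : 0 < k) {γ : Type*} [Fintype γ] [DecidableEq γ] (u : γ → γ) :
    ftype (Sum.elim (fun _ : Fin k => (Sum.inl ⟨0, hk⟩ : Fin k ⊕ γ)) (fun w => Sum.inr (u w)))
      = (k ::ₘ Multiset.replicate (k-1) 0) + ftype u := by
  set i0 : Fin k := ⟨0, hk⟩
  set comb : Fin k ⊕ γ → Fin k ⊕ γ :=
    Sum.elim (fun _ : Fin k => (Sum.inl i0 : Fin k ⊕ γ)) (fun w => Sum.inr (u w)) with hcomb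
  have huniv : (univ : Finset (Fin k ⊕ γ)).val
      = (univ : Finset (Fin k)).val.map Sum.inl + (univ : Finset γ).val.map Sum.inr := by
    rw [← Finset.univ_disjSum_univ, Finset.val_disjSum]
    rfl
  have fib_inl : ∀ y : Fin k, fibc comb (Sum.inl y) = if y = i0 then k else 0 := by
    intro y
    rw [fibc_eq_card, Fintype.card_congr (subtypeSumEquiv _), Fintype.card_sum]
    by_cases h : y = i0
    · subst h
      simp [Fintype.card_subtype, comb]
    · simp [Fintype.card_subtype, comb, Ne.symm h, h]
  have fib_inr : ∀ w : γ, fibc comb (Sum.inr w) = fibc u w := by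
    intro w
    rw [fibc_eq_card, fibc_eq_card, Fintype.card_congr (subtypeSumEquiv _), Fintype.card_sum]
    have h1 : Fintype.card {x : Fin k // comb (Sum.inl x) = Sum.inr w} = 0 := by
      simp [Fintype.card_subtype, comb]
    have h2 : Fintype.card {y : γ // comb (Sum.inr y) = Sum.inr w}
        = Fintype.card {y : γ // u y = w} := by
      apply Fintype.card_congr
      apply Equiv.subtypeEquiv (Equiv.refl γ)
      intro y
      simp [comb]
    rw [h1, h2, zero_add]
  unfold ftype
  rw [huniv, Multiset.map_add, Multiset.map_map, Multiset.map_map]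
  have hmapl : Multiset.map (fibc comb ∘ Sum.inl) (univ : Finset (Fin k)).val
      = k ::ₘ Multiset.replicate (k-1) 0 := by
    have hmem : i0 ∈ (univ : Finset (Fin k)).val := Finset.mem_univ_val i0
    rw [← Multiset.cons_erase hmem, Multiset.map_cons]
    have h1 : (fibc comb ∘ Sum.inl) i0 = k := by
      rw [Function.comp_apply, fib_inl, if_pos rfl]
    rw [h1]
    congr 1
    apply Multiset.eq_replicate.2
    constructor
    · rw [Multiset.card_map, Multiset.card_erase_of_mem hmem]
      simp
    · intro b hb
      obtain ⟨y, hy, hyb⟩ := Multiset.mem_map.1 hb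
      have hne : y ≠ i0 := by
        intro h
        subst h
        exact ((univ : Finset (Fin k)).nodup.not_mem_erase) hy
      rw [← hyb, Function.comp_apply, fib_inl, if_neg hne]
  have hmapr : Multiset.map (fibc comb ∘ Sum.inr) (univ : Finset γ).val = ftype u := by
    unfold ftype
    congr 1
    funext w
    exact fib_inr w
  rw [hmapl, hmapr]
  rfl

lemma card_le_sum_of_pos : ∀ (s : Multiset ℕ), (∀ x ∈ s, 0 < x) → Multiset.card s ≤ s.sum := by
  intro s
  refine Multiset.induction_on s ?_ ?_
  · intro _; simp
  · intro a t ih hpos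
    simp only [Multiset.card_cons, Multiset.sum_cons]
    have ha := hpos a (Multiset.mem_cons_self a t)
    have ht := ih (fun x hx => hpos x (Multiset.mem_cons_of_mem hx))
    omega

lemma exists_realize : ∀ (s : Multiset ℕ), (∀ x ∈ s, 0 < x) →
    ∃ u : Fin s.sum → Fin s.sum,
      ftype u = s + Multiset.replicate (s.sum - Multiset.card s) 0 := by
  intro s
  refine Multiset.induction_on s ?_ ?_
  · intro _
    exact ⟨id, by simp [ftype]; exact Finset.univ_eq_empty_iff.2 ⟨fun x => absurd x.2 (by simp)⟩⟩
  · intro k t ih hpos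
    have hk : 0 < k := hpos k (Multiset.mem_cons_self k t)
    obtain ⟨u', hu'⟩ := ih (fun x hx => hpos x (Multiset.mem_cons_of_mem hx))
    have hsum : (k ::ₘ t).sum = k + t.sum := Multiset.sum_cons k t
    rw [hsum, Multiset.card_cons]
    set comb : Fin k ⊕ Fin t.sum → Fin k ⊕ Fin t.sum :=
      Sum.elim (fun _ => Sum.inl ⟨0, hk⟩) (fun w => Sum.inr (u' w)) with hcombdef
    refine ⟨⇑finSumFinEquiv ∘ comb ∘ ⇑finSumFinEquiv.symm, ?_⟩
    rw [ftype_conj finSumFinEquiv comb, hcombdef, ftype_comb hk u', hu']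
    have hle := card_le_sum_of_pos t (fun x hx => hpos x (Multiset.mem_cons_of_mem hx))
    have harith : (k - 1) + (t.sum - Multiset.card t)
        = k + t.sum - (Multiset.card t + 1) := by omega
    rw [Multiset.cons_add, Multiset.cons_add]
    congr 1
    rw [← add_assoc, add_comm (Multiset.replicate (k-1) 0) t, add_assoc,
      ← Multiset.replicate_add, harith]

/-! ### partitions -/

lemma sum_ftype {n : ℕ} (a : Fin n → Fin n) : (ftype a).sum = n := by
  have h := Finset.card_eq_sum_card_fiberwise
    (f := a) (s := (univ : Finset (Fin n))) (t := univ) (fun x _ => mem_univ _)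
  have h2 : (ftype a).sum = ∑ y : Fin n, (univ.filter (fun x => a x = y)).card := rfl
  rw [h2, ← h, card_univ, Fintype.card_fin]

/-- the partition of `n` associated to a transformation -/
def Pa {n : ℕ} (a : Fin n → Fin n) : Nat.Partition n where
  parts := (ftype a).filter (fun x => 0 < x)
  parts_pos := fun {i} hi => (Multiset.mem_filter.1 hi).2
  parts_sum := by
    have h1 := Multiset.filter_add_not (fun x => 0 < x) (ftype a)
    have h2 : ((ftype a).filter (fun x => ¬ 0 < x)).sum = 0 :=
      Multiset.sum_eq_zero (fun x hx => by
        have := (Multiset.mem_filter.1 hx).2; omega)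
    have h3 := congrArg Multiset.sum h1
    rw [Multiset.sum_add, h2, add_zero] at h3
    rw [h3, sum_ftype]

lemma ftype_decomp {n : ℕ} (a : Fin n → Fin n) :
    ftype a = (Pa a).parts + Multiset.replicate (n - Multiset.card (Pa a).parts) 0 := by
  have h1 := (Multiset.filter_add_not (fun x => 0 < x) (ftype a)).symm
  have h2 : (ftype a).filter (fun x => ¬ 0 < x)
      = Multiset.replicate (n - Multiset.card ((ftype a).filter (fun x => 0 < x))) 0 := by
    apply Multiset.eq_replicate.2
    constructor
    · have hcards := congrArg Multiset.card (Multiset.filter_add_not (fun x => 0 < x) (ftype a))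
      rw [Multiset.card_add, card_ftype, Fintype.card_fin] at hcards
      omega
    · intro b hb
      have := (Multiset.mem_filter.1 hb).2
      omega
  rw [h2] at h1
  exact h1

lemma exists_realize_partition {n : ℕ} (lam : Nat.Partition n) :
    ∃ u : Fin n → Fin n,
      ftype u = lam.parts + Multiset.replicate (n - Multiset.card lam.parts) 0 := by
  have h := exists_realize lam.parts (fun x hx => lam.parts_pos hx)
  rwa [lam.parts_sum] at h

lemma parts_recover {n : ℕ} (lam : Nat.Partition n) (m : ℕ) :
    (lam.parts + Multiset.replicate m 0).filter (fun x => 0 < x) = lam.parts := by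
  rw [Multiset.filter_add]
  have h1 : lam.parts.filter (fun x => 0 < x) = lam.parts :=
    Multiset.filter_eq_self.2 (fun x hx => lam.parts_pos hx)
  have h2 : (Multiset.replicate m 0).filter (fun x : ℕ => 0 < x) = 0 := by
    apply Multiset.filter_eq_nil.2
    intro b hb
    have := Multiset.eq_of_mem_replicate hb
    omega
  rw [h1, h2, add_zero]

end CIT

/-- The number of isomorphism classes of semigroups `(T_n, *_a)`, `a ∈ T_n`,
equals `p(n)`, the number of partitions of `n`: there is a set of `p(n)`
deforming elements meeting each isomorphism class exactly once. -/
theorem card_iso_classes_T (n : ℕ) :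
    ∃ S : Finset (Fin n → Fin n), S.card = Fintype.card (Nat.Partition n) ∧
      (∀ a : Fin n → Fin n, ∃ b ∈ S, ∃ e : (Fin n → Fin n) ≃ (Fin n → Fin n),
          ∀ x y : Fin n → Fin n, e (Tdmul a x y) = Tdmul b (e x) (e y)) ∧
      (∀ a ∈ S, ∀ b ∈ S,
        (∃ e : (Fin n → Fin n) ≃ (Fin n → Fin n),
            ∀ x y : Fin n → Fin n, e (Tdmul a x y) = Tdmul b (e x) (e y)) → a = b) := by
  classical
  choose c hc using fun lam : Nat.Partition n => CIT.exists_realize_partition lam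
  have hparts : ∀ lam : Nat.Partition n,
      (CIT.ftype (c lam)).filter (fun x => 0 < x) = lam.parts := by
    intro lam
    rw [hc lam, CIT.parts_recover]
  have hcinj : Function.Injective c := by
    intro lam mu h
    have h2 : lam.parts = mu.parts := by
      rw [← hparts lam, ← hparts mu, h]
    cases lam; cases mu
    simp_all
  refine ⟨Finset.image c Finset.univ, ?_, ?_, ?_⟩
  · rw [Finset.card_image_of_injective _ hcinj, Finset.card_univ]
  · intro a
    refine ⟨c (CIT.Pa a), Finset.mem_image_of_mem _ (Finset.mem_univ _), ?_⟩
    apply CIT.iso_of_ftype_eq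
    rw [hc (CIT.Pa a)]
    exact CIT.ftype_decomp a
  · rintro a ha b hb ⟨e, he⟩
    obtain ⟨lam, -, rfl⟩ := Finset.mem_image.1 ha
    obtain ⟨mu, -, rfl⟩ := Finset.mem_image.1 hb
    have h1 : CIT.Etype (c lam) = CIT.Etype (c mu) := CIT.Etype_eq_of_iso e he
    have h2 : CIT.ftype (c lam) = CIT.ftype (c mu) := CIT.ftype_eq_of_Etype_eq h1
    have h3 : lam = mu := by
      have := hparts lam
      rw [h2, hparts mu] at this
      cases lam; cases mu
      simp_all
    rw [h3]
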